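/- Entropy computation for the extended classical–quantum state: for every attack E, the purification vectors φ_i are unit vectors, and the state Θ̃ := ∑_{i ∈ I} 2^{-N} |e_i⟩⟨e_i| ⊗ |φ_i⟩⟨φ_i| satisfies S(Θ̃|_R) = N and S(Θ̃) = N, where Θ̃|_R is the partial trace onto the first factor ℂ^{2^N}. Consequently the quantum mutual entropy S(Θ̃|_R) + S(Θ̃|_{E'P}) − S(Θ̃) equals S(2^{-N} ∑_{i ∈ I} |φ_i⟩⟨φ_i|). -/

import Mathlib

open scoped ComplexInnerProductSpace ComplexOrder
open Finset

namespace IDT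

/-- N-bit strings. -/
abbrev Bits (N : ℕ) := Fin N → ZMod 2

/-- Bitwise dot product `i·k := ∑ n i_n k_n` (lifting bits to naturals). -/
def bdot {N : ℕ} (i k : Bits N) : ℕ := ∑ n, (i n).val * (k n).val

/-- Eve's attack: unitarity condition on the family of vectors. -/
def Attack {N M : ℕ} (E : Bits N → Bits N → EuclideanSpace ℂ (Fin M)) : Prop :=
  ∀ i k : Bits N, (∑ j : Bits N, ⟪E i j, E k j⟫) = if i = k then 1 else 0

/-- Conjugate-basis vectors `Ē l s := 2^{-N} ∑_{i,j} (-1)^{s·j + i·l} E i j`. -/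
noncomputable def Ebar {N M : ℕ} (E : Bits N → Bits N → EuclideanSpace ℂ (Fin M))
    (l s : Bits N) : EuclideanSpace ℂ (Fin M) :=
  (2 ^ N : ℂ)⁻¹ • ∑ i : Bits N, ∑ j : Bits N, ((-1 : ℂ) ^ (bdot s j + bdot i l)) • E i j

/-- Error distribution of Bob's conjugate-basis outcome. -/
noncomputable def pbar {N M : ℕ} (E : Bits N → Bits N → EuclideanSpace ℂ (Fin M))
    (c : Bits N) : ℝ :=
  (2 ^ N : ℝ)⁻¹ * ∑ i : Bits N, ‖Ebar E i (i + c)‖ ^ 2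

/-- `-x log₂ x` (with the convention `0 log₂ 0 = 0`). -/
noncomputable def ent2 (x : ℝ) : ℝ := -(x * Real.logb 2 x)

/-- A POVM on `ℂ^M` with finite outcome set `A`. -/
structure POVM (A : Type*) [Fintype A] (M : ℕ) where
  X : A → Matrix (Fin M) (Fin M) ℂ
  posSemidef : ∀ a : A, (X a).PosSemidef
  sum_one : ∑ a : A, X a = 1

/-- Eve's outcome probability `p(α|i)`. -/
noncomputable def pOut {N M : ℕ} {A : Type*} [Fintype A]
    (E : Bits N → Bits N → EuclideanSpace ℂ (Fin M)) (P : POVM A M) (a : A) (i : Bits N) : ℝ :=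
  (∑ j : Bits N, ⟪E i j, Matrix.toEuclideanLin (P.X a) (E i j)⟫).re

/-- (base-2) Shannon mutual information of a joint distribution. -/
noncomputable def mutualInfo {S T : Type*} [Fintype S] [Fintype T] (p : S → T → ℝ) : ℝ :=
  (∑ s, ent2 (∑ t, p s t)) + (∑ t, ent2 (∑ s, p s t)) - ∑ s, ∑ t, ent2 (p s t)

/-- Eve's information gain `I(A:E[X]|b)`. -/
noncomputable def infoGain {N M : ℕ} {A : Type*} [Fintype A]
    (E : Bits N → Bits N → EuclideanSpace ℂ (Fin M)) (P : POVM A M) : ℝ :=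
  mutualInfo (fun (i : Bits N) (a : A) => (2 ^ N : ℝ)⁻¹ * pOut E P a i)

/-- Elementary tensor of two Euclidean-space vectors. -/
noncomputable def tens {α β : Type*} (u : EuclideanSpace ℂ α) (v : EuclideanSpace ℂ β) :
    EuclideanSpace ℂ (α × β) :=
  (WithLp.equiv 2 ((α × β) → ℂ)).symm (fun p => u p.1 * v p.2)

/-- Symmetrized attack vectors. -/
noncomputable def Es {N M : ℕ} (E : Bits N → Bits N → EuclideanSpace ℂ (Fin M))
    (i j : Bits N) : EuclideanSpace ℂ (Bits N × Fin M) :=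
  (((Real.sqrt (2 ^ N))⁻¹ : ℝ) : ℂ) •
    ∑ m : Bits N, ((-1 : ℂ) ^ bdot m (i + j)) • tens (EuclideanSpace.single m 1) (E (i + m) (j + m))

/-- The operator `|e_m⟩⟨e_m| ⊗ X` as a matrix on `ℂ^{2^N} ⊗ ℂ^M`. -/
def projTens {N M : ℕ} (m : Bits N) (X : Matrix (Fin M) (Fin M) ℂ) :
    Matrix (Bits N × Fin M) (Bits N × Fin M) ℂ :=
  Matrix.of fun p q => (if p.1 = m ∧ q.1 = m then 1 else 0) * X p.2 q.2

/-- Purification vectors `φ_i`. -/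
noncomputable def phi {N M : ℕ} (E : Bits N → Bits N → EuclideanSpace ℂ (Fin M))
    (i : Bits N) : EuclideanSpace ℂ ((Bits N × Fin M) × Bits N) :=
  ∑ j : Bits N, tens (Es E i j) (EuclideanSpace.single (i + j) 1)

/-- Rank-one projection `|ψ⟩⟨ψ|` as a matrix. -/
noncomputable def outer {α : Type*} (ψ : EuclideanSpace ℂ α) : Matrix α α ℂ :=
  Matrix.of fun x y => ψ x * star (ψ y)

/-- Partial trace over the second tensor factor. -/
noncomputable def ptraceSnd {α β : Type*} [Fintype β] (Θ : Matrix (α × β) (α × β) ℂ) : Matrix α α ℂ :=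
  Matrix.of fun i j => ∑ b : β, Θ (i, b) (j, b)

/-- Partial trace over the first tensor factor. -/
noncomputable def ptraceFst {α β : Type*} [Fintype α] (Θ : Matrix (α × β) (α × β) ℂ) : Matrix β β ℂ :=
  Matrix.of fun x y => ∑ a : α, Θ (a, x) (a, y)

-- von Neumann entropy (base 2) of a Hermitian matrix (junk value `0` otherwise).
open Classical in
noncomputable def vN {n : Type*} [Fintype n] [DecidableEq n] (ρ : Matrix n n ℂ) : ℝ :=
  if h : ρ.IsHermitian then ∑ i, ent2 (h.eigenvalues i) else 0

/-- Classical–quantum state `∑ i p_i |e_i⟩⟨e_i| ⊗ ρ_i`. -/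
def cqState {F G : Type*} [DecidableEq F] (p : F → ℝ) (ρ : F → Matrix G G ℂ) :
    Matrix (F × G) (F × G) ℂ :=
  Matrix.of fun x y => if x.1 = y.1 then (p x.1 : ℂ) * ρ x.1 x.2 y.2 else 0


lemma bits_add_self {N : ℕ} (a : Bits N) : a + a = 0 := by
  funext n
  exact CharTwo.add_self_eq_zero (a n)

lemma bits_add_cancel {N : ℕ} (a b : Bits N) : a + (a + b) = b := by
  rw [← add_assoc, bits_add_self, zero_add]

lemma card_bits (N : ℕ) : Fintype.card (Bits N) = 2 ^ N := by
  simp [Bits]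

lemma phi_apply {N M : ℕ} (E : Bits N → Bits N → EuclideanSpace ℂ (Fin M))
    (i m k : Bits N) (f : Fin M) :
    phi E i ((m, f), k)
      = (((Real.sqrt (2 ^ N))⁻¹ : ℝ) : ℂ) * ((-1 : ℂ) ^ bdot m k) * E (i + m) (i + k + m) f := by
  rw [phi]
  rw [WithLp.ofLp_sum, Finset.sum_apply]
  simp only [tens, WithLp.equiv_symm_apply, PiLp.toLp_apply, EuclideanSpace.single_apply]
  rw [Finset.sum_eq_single (i + k)]
  · rw [if_pos (bits_add_cancel i k).symm]
    rw [Es, PiLp.smul_apply, WithLp.ofLp_sum, Finset.sum_apply]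
    simp only [tens, WithLp.equiv_symm_apply, PiLp.toLp_apply, EuclideanSpace.single_apply, PiLp.smul_apply,
      smul_eq_mul]
    rw [Finset.sum_eq_single m]
    · rw [if_pos rfl, bits_add_cancel]
      ring
    · intro b _ hb
      rw [if_neg (by simpa using (Ne.symm hb))]
      ring
    · intro h; exact absurd (Finset.mem_univ m) h
  · intro j _ hj
    rw [if_neg fun h => hj (by rw [h, bits_add_cancel])]
    ring
  · intro h; exact absurd (Finset.mem_univ _) h

lemma conj_phi_mul {N M : ℕ} (E : Bits N → Bits N → EuclideanSpace ℂ (Fin M))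
    (i m k : Bits N) (f : Fin M) :
    (starRingEnd ℂ) (phi E i ((m, f), k)) * phi E i ((m, f), k)
      = ((((2:ℝ) ^ N)⁻¹ : ℝ) : ℂ)
        * ((starRingEnd ℂ) (E (i + m) (i + k + m) f) * E (i + m) (i + k + m) f) := by
  rw [phi_apply, map_mul, map_mul, Complex.conj_ofReal, map_pow, map_neg, map_one]
  have hB : ((-1:ℂ) ^ bdot m k) * ((-1:ℂ) ^ bdot m k) = 1 := by
    rw [← mul_pow]; norm_num
  have hA : (((Real.sqrt (2 ^ N))⁻¹ : ℝ) : ℂ) * (((Real.sqrt (2 ^ N))⁻¹ : ℝ) : ℂ)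
      = ((((2:ℝ) ^ N)⁻¹ : ℝ) : ℂ) := by
    rw [← Complex.ofReal_mul, ← mul_inv, Real.mul_self_sqrt (by positivity)]
  calc (((Real.sqrt (2 ^ N))⁻¹ : ℝ) : ℂ) * (-1:ℂ) ^ bdot m k * (starRingEnd ℂ) (E (i + m) (i + k + m) f)
        * ((((Real.sqrt (2 ^ N))⁻¹ : ℝ) : ℂ) * (-1:ℂ) ^ bdot m k * E (i + m) (i + k + m) f)
      = ((((Real.sqrt (2 ^ N))⁻¹ : ℝ) : ℂ) * (((Real.sqrt (2 ^ N))⁻¹ : ℝ) : ℂ))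
        * ((((-1:ℂ) ^ bdot m k) * ((-1:ℂ) ^ bdot m k))
          * ((starRingEnd ℂ) (E (i + m) (i + k + m) f) * E (i + m) (i + k + m) f)) := by ring
    _ = _ := by rw [hA, hB, one_mul]

lemma inner_phi_self {N M : ℕ} (E : Bits N → Bits N → EuclideanSpace ℂ (Fin M)) (hE : Attack E)
    (i : Bits N) : ⟪phi E i, phi E i⟫ = 1 := by
  rw [PiLp.inner_apply]
  simp only [RCLike.inner_apply]
  rw [Fintype.sum_prod_type, Fintype.sum_prod_type]
  have hcm : ∀ x, phi E i x * (starRingEnd ℂ) (phi E i x) = (starRingEnd ℂ) (phi E i x) * phi E i x :=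
    fun x => mul_comm _ _
  simp only [hcm, conj_phi_mul E i]
  have step1 : ∀ m : Bits N, (∑ f : Fin M, ∑ k : Bits N,
      ((starRingEnd ℂ) (E (i + m) (i + k + m) f) * E (i + m) (i + k + m) f)) = 1 := by
    intro m
    rw [Finset.sum_comm]
    have hinner : ∀ k : Bits N, (∑ f : Fin M,
        (starRingEnd ℂ) (E (i + m) (i + k + m) f) * E (i + m) (i + k + m) f)
        = ⟪E (i + m) (i + k + m), E (i + m) (i + k + m)⟫ := by
      intro k; rw [PiLp.inner_apply]; simp only [RCLike.inner_apply]
      exact Finset.sum_congr rfl fun x _ => mul_comm _ _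
    simp only [hinner]
    have hbij : Function.Bijective (fun k : Bits N => i + k + m) := by
      rw [← Finite.injective_iff_bijective]
      intro a b hab
      simpa using hab
    calc (∑ k : Bits N, ⟪E (i + m) (i + k + m), E (i + m) (i + k + m)⟫)
        = ∑ j : Bits N, ⟪E (i + m) j, E (i + m) j⟫ :=
          Fintype.sum_bijective _ hbij _ _ (fun k => rfl)
      _ = 1 := by rw [hE (i + m) (i + m), if_pos rfl]
  simp only [← Finset.mul_sum, step1]
  simp only [Finset.sum_const, card_univ, card_bits, nsmul_eq_mul, mul_one]
  push_cast
  rw [inv_mul_cancel₀ (by positivity)]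

lemma norm_phi {N M : ℕ} (E : Bits N → Bits N → EuclideanSpace ℂ (Fin M)) (hE : Attack E)
    (i : Bits N) : ‖phi E i‖ = 1 := by
  have h2 := (inner_self_eq_norm_sq_to_K (𝕜 := ℂ) (phi E i)).symm
  rw [inner_phi_self E hE i] at h2
  have h3 : ((‖phi E i‖ ^ 2 : ℝ) : ℂ) = ((1 : ℝ) : ℂ) := by push_cast; exact h2
  have h4 := Complex.ofReal_inj.mp h3
  nlinarith [norm_nonneg (phi E i)]

lemma sum_phi_normSq {N M : ℕ} (E : Bits N → Bits N → EuclideanSpace ℂ (Fin M)) (hE : Attack E)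
    (i : Bits N) :
    (∑ x : (Bits N × Fin M) × Bits N, phi E i x * (starRingEnd ℂ) (phi E i x)) = 1 := by
  have h := inner_phi_self E hE i
  rw [PiLp.inner_apply] at h
  simp only [RCLike.inner_apply] at h
  rw [← h]

section CQ

variable {F G : Type*} [Fintype F] [Fintype G] [DecidableEq F]
  (c : ℝ) (ψ : F → EuclideanSpace ℂ G)

lemma cq_herm : (cqState (fun _ : F => c) (fun i => outer (ψ i))).IsHermitian := by
  ext ⟨a, u⟩ ⟨b, v⟩
  rw [Matrix.conjTranspose_apply]
  by_cases h : a = b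
  · subst h
    simp only [cqState, outer, Matrix.of_apply, if_pos rfl, if_true]
    rw [star_mul', star_mul', Complex.star_def, Complex.conj_ofReal, Complex.conj_conj]
    ring
  · simp [cqState, outer, h, Ne.symm h]

lemma cq_sq (hψ : ∀ a, (∑ x, ψ a x * (starRingEnd ℂ) (ψ a x)) = 1) :
    cqState (fun _ : F => c) (fun i => outer (ψ i)) * cqState (fun _ : F => c) (fun i => outer (ψ i))
      = ((c : ℝ) : ℂ) • cqState (fun _ : F => c) (fun i => outer (ψ i)) := by
  ext ⟨a, u⟩ ⟨b, v⟩
  rw [Matrix.mul_apply, Fintype.sum_prod_type, Finset.sum_eq_single a]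
  · by_cases h : a = b
    · subst h
      simp only [cqState, outer, Matrix.of_apply, if_pos rfl, Matrix.smul_apply, smul_eq_mul]
      calc (∑ w : G, ((c:ℂ) * (ψ a u * star (ψ a w))) * ((c:ℂ) * (ψ a w * star (ψ a v))))
          = ((c:ℂ) * (c:ℂ) * (ψ a u * star (ψ a v))) * ∑ w : G, ψ a w * (starRingEnd ℂ) (ψ a w) := by
            rw [Finset.mul_sum]
            exact Finset.sum_congr rfl fun w _ => by simp only [Complex.star_def]; ring
        _ = (c:ℂ) * ((c:ℂ) * (ψ a u * star (ψ a v))) := by rw [hψ a, mul_one]; ring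
    · simp only [cqState, outer, Matrix.of_apply, if_pos rfl, if_neg h, Matrix.smul_apply,
        smul_eq_mul, mul_zero]
      simp
  · intro e _ he
    apply Finset.sum_eq_zero
    intro w _
    simp only [cqState, Matrix.of_apply, if_neg (Ne.symm he), zero_mul]
  · intro h; exact absurd (Finset.mem_univ a) h

lemma cq_trace (hψ : ∀ a, (∑ x, ψ a x * (starRingEnd ℂ) (ψ a x)) = 1) :
    (cqState (fun _ : F => c) (fun i => outer (ψ i))).trace = (Fintype.card F : ℂ) * (c : ℂ) := by
  rw [Matrix.trace]
  simp only [Matrix.diag_apply]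
  rw [Fintype.sum_prod_type]
  have : ∀ a : F, (∑ u : G, cqState (fun _ : F => c) (fun i => outer (ψ i)) (a, u) (a, u)) = (c : ℂ) := by
    intro a
    simp only [cqState, outer, Matrix.of_apply, if_pos rfl, if_true]
    rw [← Finset.mul_sum]
    simp only [Complex.star_def]
    rw [hψ a, mul_one]
  simp only [this, Finset.sum_const, card_univ, nsmul_eq_mul]

lemma cq_ptraceSnd (hψ : ∀ a, (∑ x, ψ a x * (starRingEnd ℂ) (ψ a x)) = 1) :
    ptraceSnd (cqState (fun _ : F => c) (fun i => outer (ψ i))) = ((c : ℝ) : ℂ) • 1 := by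
  ext a b
  simp only [ptraceSnd, Matrix.of_apply, Matrix.smul_apply, Matrix.one_apply, smul_eq_mul]
  by_cases h : a = b
  · subst h
    simp only [cqState, outer, Matrix.of_apply, if_pos rfl, if_true]
    rw [← Finset.mul_sum]
    simp only [Complex.star_def]
    rw [hψ a]
  · simp [cqState, h]

lemma cq_ptraceFst :
    ptraceFst (cqState (fun _ : F => c) (fun i => outer (ψ i)))
      = ((c : ℝ) : ℂ) • ∑ a : F, outer (ψ a) := by
  ext u v
  simp only [ptraceFst, Matrix.of_apply, Matrix.smul_apply, Matrix.sum_apply, smul_eq_mul,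
    cqState, if_pos rfl, if_true]
  rw [Finset.mul_sum]

end CQ
open Matrix in
lemma vN_of_proj {n : Type*} [Fintype n] [DecidableEq n] (N : ℕ)
    (ρ : Matrix n n ℂ) (hH : ρ.IsHermitian)
    (hsq : ρ * ρ = ((2 : ℂ) ^ N)⁻¹ • ρ) (htr : ρ.trace = 1) : vN ρ = N := by
  classical
  set c : ℝ := ((2:ℝ) ^ N)⁻¹ with hc
  have hcpos : (0:ℝ) < c := by positivity
  have heig : ∀ i, hH.eigenvalues i = 0 ∨ hH.eigenvalues i = c := by
    intro i
    set v := ⇑(hH.eigenvectorBasis i) with hv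
    have hv1 : ρ *ᵥ v = (hH.eigenvalues i : ℝ) • v := hH.mulVec_eigenvectorBasis i
    have hvne : ∃ j, v j ≠ 0 := by
      by_contra h
      push_neg at h
      have : hH.eigenvectorBasis i = 0 := by
        ext j; exact h j
      have hb := hH.eigenvectorBasis.orthonormal.1 i
      rw [this, norm_zero] at hb
      exact zero_ne_one hb
    obtain ⟨j, hj⟩ := hvne
    have h2 : (ρ * ρ) *ᵥ v = ((hH.eigenvalues i : ℂ) * (hH.eigenvalues i : ℂ)) • v := by
      rw [← Matrix.mulVec_mulVec, hv1, Matrix.mulVec_smul, hv1, smul_smul]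
      norm_num [← Complex.coe_smul]
    rw [hsq] at h2
    have h3 := congrFun h2 j
    simp only [Matrix.smul_mulVec, hv1, Pi.smul_apply, smul_eq_mul,
      ← Complex.coe_smul] at h3
    have h4 : (hH.eigenvalues i : ℂ) * (hH.eigenvalues i : ℂ)
        = ((2:ℂ)^N)⁻¹ * (hH.eigenvalues i : ℂ) := by
      apply mul_right_cancel₀ hj
      linear_combination -h3
    have h5 : ((2:ℂ)^N)⁻¹ = ((c:ℝ) : ℂ) := by push_cast [hc]; norm_num
    rw [h5] at h4
    have h6 : hH.eigenvalues i * hH.eigenvalues i = c * hH.eigenvalues i := by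
      exact_mod_cast h4
    rcases mul_eq_zero.mp (by linarith [h6] : hH.eigenvalues i * (hH.eigenvalues i - c) = 0) with h | h
    · exact Or.inl h
    · exact Or.inr (by linarith)
  have hsum : ∑ i, hH.eigenvalues i = 1 := by
    have hU := hH.spectral_theorem
    have hUu : (hH.eigenvectorUnitary : Matrix n n ℂ) * star (hH.eigenvectorUnitary : Matrix n n ℂ) = 1 :=
      (Matrix.mem_unitaryGroup_iff).mp hH.eigenvectorUnitary.2
    have : ρ.trace = ∑ i, (hH.eigenvalues i : ℂ) := by
      conv_lhs => rw [hU]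
      rw [Unitary.conjStarAlgAut_apply, Matrix.trace_mul_cycle,
        (Matrix.mem_unitaryGroup_iff').mp hH.eigenvectorUnitary.2, one_mul,
        Matrix.trace_diagonal]
      simp [Function.comp]
    rw [htr] at this
    exact_mod_cast this.symm
  have hlogb : Real.logb 2 c = -N := by
    rw [hc, Real.logb_inv, Real.logb_pow, Real.logb_self_eq_one] <;> norm_num
  have hent : ∀ i, ent2 (hH.eigenvalues i) = N * hH.eigenvalues i := by
    intro i
    rcases heig i with h | h <;> rw [h] <;> simp [ent2, hlogb] <;> ring
  rw [vN, dif_pos hH]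
  simp only [hent, ← Finset.mul_sum, hsum, mul_one]

lemma smul_one_herm (c : ℝ) {n : Type*} [Fintype n] [DecidableEq n] :
    (((c : ℝ) : ℂ) • (1 : Matrix n n ℂ)).IsHermitian := by
  rw [Matrix.IsHermitian, Matrix.conjTranspose_smul, Matrix.conjTranspose_one]
  congr 1
  exact Complex.conj_ofReal c


/-- Entropy computation for the extended classical–quantum state `Θ̃`. -/
theorem theta_tilde_entropies {N M : ℕ} (hN : 1 ≤ N)
    (E : Bits N → Bits N → EuclideanSpace ℂ (Fin M)) (hE : Attack E)
    (Θ : Matrix (Bits N × ((Bits N × Fin M) × Bits N)) (Bits N × ((Bits N × Fin M) × Bits N)) ℂ)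
    (hΘ : Θ = cqState (fun _ : Bits N => (2 ^ N : ℝ)⁻¹) (fun i => outer (phi E i))) :
    (∀ i : Bits N, ‖phi E i‖ = 1)
    ∧ vN (ptraceSnd Θ) = N
    ∧ vN Θ = N
    ∧ vN (ptraceSnd Θ) + vN (ptraceFst Θ) - vN Θ
      = vN ((2 ^ N : ℂ)⁻¹ • ∑ i : Bits N, outer (phi E i)) := by
  subst hΘ
  have hψ : ∀ a : Bits N,
      (∑ x : (Bits N × Fin M) × Bits N, phi E a x * (starRingEnd ℂ) (phi E a x)) = 1 :=
    fun a => sum_phi_normSq E hE a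
  have hcoe : (((2 ^ N : ℝ)⁻¹ : ℝ) : ℂ) = ((2 : ℂ) ^ N)⁻¹ := by push_cast; ring
  have hcard : ((Fintype.card (Bits N) : ℂ)) = (2 : ℂ) ^ N := by rw [card_bits]; push_cast; ring
  have h2N : ((2 : ℂ) ^ N) ≠ 0 := pow_ne_zero _ two_ne_zero
  have hA : vN (ptraceSnd (cqState (fun _ : Bits N => (2 ^ N : ℝ)⁻¹)
      (fun i => outer (phi E i)))) = N := by
    rw [cq_ptraceSnd _ _ hψ]
    apply vN_of_proj N
    · exact smul_one_herm _
    · rw [hcoe, smul_mul_assoc, mul_smul_comm, one_mul, smul_smul]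
    · rw [Matrix.trace_smul, Matrix.trace_one, smul_eq_mul, hcard, hcoe,
        inv_mul_cancel₀ h2N]
  have hB : vN (cqState (fun _ : Bits N => (2 ^ N : ℝ)⁻¹) (fun i => outer (phi E i))) = N := by
    apply vN_of_proj N
    · exact cq_herm _ _
    · rw [cq_sq _ _ hψ, hcoe]
    · rw [cq_trace _ _ hψ, hcard, hcoe, mul_inv_cancel₀ h2N]
  have hC : ptraceFst (cqState (fun _ : Bits N => (2 ^ N : ℝ)⁻¹) (fun i => outer (phi E i)))
      = ((2 : ℂ) ^ N)⁻¹ • ∑ i : Bits N, outer (phi E i) := by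
    rw [cq_ptraceFst, hcoe]
  refine ⟨fun i => norm_phi E hE i, hA, hB, ?_⟩
  rw [hA, hB, hC]
  ring_nf
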